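/- arXiv:2406.03471 — 5 statements merged into one kernel-verified Lean document; each statement's English description precedes it below -/
import Mathlib

section
/- The poset ℙ₁ is countably closed: for every sequence f₀, f₁, f₂, … of elements of ℙ₁ such that f_{k+1} ⊇* f_k for every k (i.e. f_k ∖ f_{k+1} is finite), there exists f ∈ ℙ₁ such that f ⊇* f_k for every k. -/
/-- A partial function from ℕ to {0,1} is represented as `f : ℕ → Option Bool`,
with `dom f = {n | f n ≠ none}` and value `1` represented by `true`.
`memP1 f` says `f ∈ ℙ₁`: `limsup_{n→∞} |[2^n, 2^{n+1}) ∖ dom f| = ∞`, i.e.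
for every `m` there are infinitely many `n` with `|[2^n,2^{n+1}) ∖ dom f| ≥ m`. -/
def memP1 (f : ℕ → Option Bool) : Prop :=
  ∀ m N : ℕ, ∃ n ≥ N, m ≤ ((Finset.Ico (2 ^ n) (2 ^ (n + 1))).filter
    (fun i => f i = none)).card

/-- The poset ℙ₁ is countably closed: for every sequence `F 0, F 1, F 2, …` of elements
of ℙ₁ such that `F (k+1) ⊇* F k` for every `k` (i.e. `F k ∖ F (k+1)`, the set of points
where `F k` is defined but `F (k+1)` does not agree with it, is finite), there is
`f ∈ ℙ₁` with `f ⊇* F k` for every `k`. -/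
theorem P1_countably_closed (F : ℕ → ℕ → Option Bool)
    (hF : ∀ k, memP1 (F k))
    (hchain : ∀ k, {n : ℕ | F k n ≠ none ∧ F (k + 1) n ≠ F k n}.Finite) :
    ∃ f : ℕ → Option Bool, memP1 f ∧
      ∀ k, {n : ℕ | F k n ≠ none ∧ f n ≠ F k n}.Finite := by
  classical
  -- bounds beyond which F (k+1) agrees with F k
  have hB : ∀ k, ∃ t, ∀ n, t ≤ n → F k n ≠ none → F (k + 1) n = F k n := by
    intro k
    obtain ⟨t, ht⟩ := (hchain k).bddAbove
    refine ⟨t + 1, fun n hn hne => ?_⟩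
    by_contra h
    have : n ≤ t := ht ⟨hne, h⟩
    omega
  choose Bf hBf using hB
  set Bmax : ℕ → ℕ := fun m => (Finset.range m).sup Bf with hBmaxdef
  have agree : ∀ m k n, k ≤ m → Bmax m ≤ n → F k n ≠ none → F m n = F k n := by
    intro m
    induction m with
    | zero =>
      intro k n hk _ _
      have : k = 0 := by omega
      rw [this]
    | succ m ih =>
      intro k n hk hn hne
      rcases Nat.eq_or_lt_of_le hk with h | h
      · rw [h]
      · have hk' : k ≤ m := by omega
        have hsub : (Finset.range m) ⊆ Finset.range (m + 1) :=
          Finset.range_subset_range.mpr (by omega)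
        have h1 : Bmax m ≤ n := le_trans (Finset.sup_mono hsub) hn
        have h2 : F m n = F k n := ih k n hk' h1 hne
        have h3 : Bf m ≤ n :=
          le_trans (Finset.le_sup (Finset.mem_range.mpr (Nat.lt_succ_self m))) hn
        rw [hBf m n h3 (h2 ▸ hne), h2]
  -- picking blocks with many holes
  have hn : ∀ k bk : ℕ, ∃ n, (max bk k ≤ n) ∧
      k ≤ ((Finset.Ico (2 ^ n) (2 ^ (n + 1))).filter (fun i => F k i = none)).card := by
    intro k bk
    obtain ⟨n, hn1, hn2⟩ := hF k k (max bk k)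
    exact ⟨n, hn1, hn2⟩
  choose nf hnf1 hnf2 using hn
  -- the cut points
  let b : ℕ → ℕ := fun k => Nat.rec 0 (fun k bk => max (2 ^ (nf k bk + 1)) (Bmax (k + 1))) k
  have hb0 : b 0 = 0 := rfl
  have hbs : ∀ k, b (k + 1) = max (2 ^ (nf k (b k) + 1)) (Bmax (k + 1)) := fun _ => rfl
  have hble : ∀ k, b k ≤ nf k (b k) := fun k => le_trans (le_max_left _ _) (hnf1 k (b k))
  have hkle : ∀ k, k ≤ nf k (b k) := fun k => le_trans (le_max_right _ _) (hnf1 k (b k))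
  have hblock1 : ∀ k, b k ≤ 2 ^ (nf k (b k)) := fun k =>
    le_trans (hble k) (Nat.le_of_lt Nat.lt_two_pow_self)
  have hblock2 : ∀ k, 2 ^ (nf k (b k) + 1) ≤ b (k + 1) := fun k => by
    rw [hbs k]; exact le_max_left _ _
  have hBmaxb : ∀ k, Bmax (k + 1) ≤ b (k + 1) := fun k => by
    rw [hbs k]; exact le_max_right _ _
  have hbmono : StrictMono b := by
    apply strictMono_nat_of_lt_succ
    intro k
    calc b k ≤ 2 ^ (nf k (b k)) := hblock1 k
    _ < 2 ^ (nf k (b k) + 1) := Nat.pow_lt_pow_succ (by norm_num)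
    _ ≤ b (k + 1) := hblock2 k
  have hbk : ∀ k, k ≤ b k := fun k => by
    exact hbmono.le_apply (x := k)
  -- the index function
  let c : ℕ → ℕ := fun n => @Nat.findGreatest (fun k => b k ≤ n) (fun k => Nat.decLe _ _) n
  have hc1 : ∀ n, b (c n) ≤ n := by
    intro n
    show b (@Nat.findGreatest (fun k => b k ≤ n) (fun k => Nat.decLe _ _) n) ≤ n
    exact @Nat.findGreatest_spec 0 (fun k => b k ≤ n) (fun k => Nat.decLe _ _) n
      (Nat.zero_le n) (show b 0 ≤ n by rw [hb0]; exact Nat.zero_le n)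
  have hc2 : ∀ n k, b k ≤ n → k ≤ c n := by
    intro n k hk
    show k ≤ @Nat.findGreatest (fun k => b k ≤ n) (fun k => Nat.decLe _ _) n
    exact @Nat.le_findGreatest k (fun k => b k ≤ n) (fun k => Nat.decLe _ _) n
      (le_trans (hbk k) hk) hk
  refine ⟨fun n => F (c n) n, ?_, ?_⟩
  · -- memP1
    intro m N
    set k := max m N with hkdef
    refine ⟨nf k (b k), le_trans (le_max_right m N) (hkle k), ?_⟩
    have hcblock : ∀ i ∈ Finset.Ico (2 ^ (nf k (b k))) (2 ^ (nf k (b k) + 1)), c i = k := by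
      intro i hi
      rw [Finset.mem_Ico] at hi
      have h1 : k ≤ c i := hc2 i k (le_trans (hblock1 k) hi.1)
      have h2 : c i < k + 1 := by
        by_contra h
        push_neg at h
        have : b (k + 1) ≤ i := le_trans (hbmono.monotone h) (hc1 i)
        have := hblock2 k
        omega
      omega
    have : ((Finset.Ico (2 ^ (nf k (b k))) (2 ^ (nf k (b k) + 1))).filter
        (fun i => F (c i) i = none)) =
        ((Finset.Ico (2 ^ (nf k (b k))) (2 ^ (nf k (b k) + 1))).filter
        (fun i => F k i = none)) := by
      apply Finset.filter_congr
      intro i hi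
      rw [hcblock i hi]
    rw [this]
    exact le_trans (le_max_left m N) (hnf2 k (b k))
  · -- the extension condition
    intro k
    apply Set.Finite.subset (Set.finite_Iio (b (k + 1)))
    intro n hn
    obtain ⟨hne, hdis⟩ := hn
    by_contra h
    simp only [Set.mem_Iio, not_lt] at h
    have hck : k + 1 ≤ c n := hc2 n (k + 1) h
    have hcn1 : c n = (c n - 1) + 1 := by omega
    have hBm : Bmax (c n) ≤ n := by
      calc Bmax (c n) = Bmax ((c n - 1) + 1) := by rw [← hcn1]
      _ ≤ b ((c n - 1) + 1) := hBmaxb _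
      _ = b (c n) := by rw [← hcn1]
      _ ≤ n := hc1 n
    exact hdis (agree (c n) k n (by omega) hBm hne)
end

section
/- The poset ℙ₀ is countably closed: for every sequence f₀, f₁, f₂, … of elements of ℙ₀ such that f_{k+1} ⊇* f_k for every k (i.e. f_k ∖ f_{k+1} is finite), there exists f ∈ ℙ₀ such that f ⊇* f_k for every k. -/
/-- `memP0 f` says `f ∈ ℙ₀`: `f ∈ ℙ₁`, for every `n` the set `f⁻¹(1) ∩ [2^n,2^{n+1})`
has at most one element, and it is nonempty if and only if `[2^n,2^{n+1}) ⊆ dom f`. -/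
def memP0 (f : ℕ → Option Bool) : Prop :=
  memP1 f ∧
  (∀ n : ℕ, ({i | f i = some true} ∩ Set.Ico (2 ^ n) (2 ^ (n + 1))).Subsingleton) ∧
  (∀ n : ℕ, ({i | f i = some true} ∩ Set.Ico (2 ^ n) (2 ^ (n + 1))).Nonempty ↔
    ∀ i ∈ Set.Ico (2 ^ n) (2 ^ (n + 1)), f i ≠ none)

/-- Auxiliary: build a fast-growing sequence of block indices. -/
lemma exists_good_seq (P : ℕ → ℕ → Prop) (h : ∀ k N, ∃ n, N ≤ n ∧ P k n) (b : ℕ → ℕ) :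
    ∃ g : ℕ → ℕ, g 0 = 0 ∧
      ∀ k, g k < g (k + 1) ∧ b (k + 1) ≤ g (k + 1) ∧ P (k + 1) (g (k + 1)) := by
  choose c hc1 hc2 using h
  refine ⟨fun k => Nat.rec 0 (fun k p => c (k + 1) (max (p + 1) (b (k + 1)))) k, rfl,
    fun k => ?_⟩
  refine ⟨lt_of_lt_of_le (Nat.lt_succ_self _) (le_trans (le_max_left _ _) (hc1 _ _)),
    le_trans (le_max_right _ _) (hc1 _ _), hc2 _ _⟩

/-- The poset ℙ₀ is countably closed: for every sequence `F 0, F 1, F 2, …` of elements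
of ℙ₀ such that `F (k+1) ⊇* F k` for every `k` (i.e. `F k ∖ F (k+1)` is finite), there is
`f ∈ ℙ₀` with `f ⊇* F k` for every `k`. -/
theorem P0_countably_closed (F : ℕ → ℕ → Option Bool)
    (hF : ∀ k, memP0 (F k))
    (hchain : ∀ k, {n : ℕ | F k n ≠ none ∧ F (k + 1) n ≠ F k n}.Finite) :
    ∃ f : ℕ → Option Bool, memP0 f ∧
      ∀ k, {n : ℕ | F k n ≠ none ∧ f n ≠ F k n}.Finite := by
  classical
  -- The finite "exceptional" sets as Finsets, accumulated.
  let G : ℕ → Finset ℕ := fun k => (Finset.range k).biUnion fun l => (hchain l).toFinset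
  -- chain lemma: a disagreement between F j and F k (j ≤ k) on dom (F j) comes from
  -- some single step.
  have chain : ∀ j k i, j ≤ k → F j i ≠ none → F k i ≠ F j i →
      ∃ l, j ≤ l ∧ l < k ∧ F l i ≠ none ∧ F (l + 1) i ≠ F l i := by
    intro j k
    induction k with
    | zero =>
      intro i hjk h1 h2
      have : j = 0 := Nat.le_zero.mp hjk
      subst this
      exact absurd rfl h2
    | succ k ih =>
      intro i hjk h1 h2
      rcases eq_or_lt_of_le hjk with rfl | hlt
      · exact absurd rfl h2
      · have hjk' : j ≤ k := Nat.lt_succ_iff.mp hlt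
        by_cases hk : F k i = F j i
        · exact ⟨k, hjk', Nat.lt_succ_self k, by rw [hk]; exact h1, by rw [hk]; exact h2⟩
        · obtain ⟨l, h1', h2', h3'⟩ := ih i hjk' h1 hk
          exact ⟨l, h1', h2'.trans (Nat.lt_succ_self k), h3'⟩
  -- existence of blocks with many holes
  have hex : ∀ k N : ℕ, ∃ n, N ≤ n ∧
      k ≤ ((Finset.Ico (2 ^ n) (2 ^ (n + 1))).filter (fun i => F k i = none)).card := by
    intro k N
    obtain ⟨n, hn, hc⟩ := (hF k).1 k N
    exact ⟨n, hn, hc⟩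
  -- bound function
  let b : ℕ → ℕ := fun k => (G k).sup id + 1
  have hb : ∀ k i, i ∈ G k → i < b k := fun k i hi =>
    Nat.lt_succ_of_le (Finset.le_sup (f := id) hi)
  -- the fast-growing sequence of block indices
  obtain ⟨nseq, hn0, hnstep⟩ := exists_good_seq _ hex b
  have hmono : StrictMono nseq := strictMono_nat_of_lt_succ fun k => (hnstep k).1
  have hholes : ∀ k, k ≤
      ((Finset.Ico (2 ^ nseq k) (2 ^ (nseq k + 1))).filter (fun i => F k i = none)).card := by
    intro k
    cases k with
    | zero => exact Nat.zero_le _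
    | succ k => exact (hnstep k).2.2
  have hGlt : ∀ k i, i ∈ G k → i < 2 ^ nseq k := by
    intro k i hi
    cases k with
    | zero => simp [G] at hi
    | succ k =>
      have h1 : i < b (k + 1) := hb _ _ hi
      have h2 : b (k + 1) ≤ nseq (k + 1) := (hnstep k).2.1
      exact lt_of_lt_of_le (lt_of_lt_of_le h1 h2) (Nat.le_of_lt Nat.lt_two_pow_self)
  -- the "current stage" function
  let K : ℕ → ℕ := fun m => Nat.findGreatest (fun k => nseq k ≤ m) m
  have hK1 : ∀ m, nseq (K m) ≤ m := by
    intro m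
    exact Nat.findGreatest_spec (P := fun k => nseq k ≤ m) (Nat.zero_le m)
      (by show nseq 0 ≤ m; rw [hn0]; exact Nat.zero_le m)
  have hK2 : ∀ j m, nseq j ≤ m → j ≤ K m := fun j m h =>
    Nat.le_findGreatest (le_trans hmono.le_apply h) h
  have hK3 : ∀ k, K (nseq k) = k := by
    intro k
    have h1 : k ≤ K (nseq k) := hK2 k _ le_rfl
    have h2 : nseq (K (nseq k)) ≤ nseq k := hK1 _
    exact le_antisymm (hmono.le_iff_le.mp h2) h1
  -- the limit function
  refine ⟨fun i => F (K (Nat.log 2 i)) i, ⟨?_, ?_, ?_⟩, ?_⟩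
  · -- memP1
    intro m N
    set k := max m N with hk
    refine ⟨nseq k, le_trans (le_max_right m N) hmono.le_apply, ?_⟩
    have heq : (Finset.Ico (2 ^ nseq k) (2 ^ (nseq k + 1))).filter
        (fun i => F (K (Nat.log 2 i)) i = none) =
        (Finset.Ico (2 ^ nseq k) (2 ^ (nseq k + 1))).filter (fun i => F k i = none) := by
      apply Finset.filter_congr
      intro i hi
      rw [Finset.mem_Ico] at hi
      rw [Nat.log_eq_of_pow_le_of_lt_pow hi.1 hi.2, hK3]
    rw [heq]
    exact le_trans (le_max_left m N) (hholes k)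
  · -- subsingleton of true-set in each block
    intro n x hx y hy
    obtain ⟨hx1, hx2⟩ := hx
    obtain ⟨hy1, hy2⟩ := hy
    have hx1' : F (K (Nat.log 2 x)) x = some true := hx1
    have hy1' : F (K (Nat.log 2 y)) y = some true := hy1
    rw [Nat.log_eq_of_pow_le_of_lt_pow hx2.1 hx2.2] at hx1'
    rw [Nat.log_eq_of_pow_le_of_lt_pow hy2.1 hy2.2] at hy1'
    exact (hF (K n)).2.1 n ⟨hx1', hx2⟩ ⟨hy1', hy2⟩
  · -- nonempty iff fully defined
    intro n
    have hset : {i | F (K (Nat.log 2 i)) i = some true} ∩ Set.Ico (2 ^ n) (2 ^ (n + 1)) =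
        {i | F (K n) i = some true} ∩ Set.Ico (2 ^ n) (2 ^ (n + 1)) := by
      ext i
      simp only [Set.mem_inter_iff, Set.mem_setOf_eq, Set.mem_Ico]
      constructor
      · rintro ⟨h1, h2⟩
        rw [Nat.log_eq_of_pow_le_of_lt_pow h2.1 h2.2] at h1
        exact ⟨h1, h2⟩
      · rintro ⟨h1, h2⟩
        rw [Nat.log_eq_of_pow_le_of_lt_pow h2.1 h2.2]
        exact ⟨h1, h2⟩
    rw [hset, (hF (K n)).2.2 n]
    constructor
    · intro h i hi
      show F (K (Nat.log 2 i)) i ≠ none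
      rw [Nat.log_eq_of_pow_le_of_lt_pow hi.1 hi.2]
      exact h i hi
    · intro h i hi
      have h5 : F (K (Nat.log 2 i)) i ≠ none := h i hi
      rwa [Nat.log_eq_of_pow_le_of_lt_pow hi.1 hi.2] at h5
  · -- f extends each F j modulo finite
    intro j
    apply Set.Finite.subset (Set.finite_Iio (2 ^ nseq j))
    intro i hi
    obtain ⟨h1, h2⟩ := hi
    by_contra hc
    rw [Set.mem_Iio, not_lt] at hc
    have hipos : i ≠ 0 := by
      have : 0 < 2 ^ nseq j := by positivity
      omega
    have h2' : F (K (Nat.log 2 i)) i ≠ F j i := h2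
    set m := Nat.log 2 i with hm
    have him : 2 ^ m ≤ i := Nat.pow_log_le_self 2 hipos
    have hi2 : i < 2 ^ (m + 1) := Nat.lt_pow_succ_log_self (by norm_num) i
    have hjm : nseq j ≤ m := by
      by_contra hcc
      push_neg at hcc
      have : 2 ^ (m + 1) ≤ 2 ^ nseq j := Nat.pow_le_pow_right (by norm_num) hcc
      omega
    have hjK : j ≤ K m := hK2 j m hjm
    rcases eq_or_lt_of_le hjK with heq | hlt
    · exact h2' (by rw [← heq])
    · have hne : F (K m) i ≠ F j i := h2'
      obtain ⟨l, hl1, hl2, hl3, hl4⟩ := chain j (K m) i (le_of_lt hlt) h1 hne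
      have hiG : i ∈ G (K m) := by
        apply Finset.mem_biUnion.mpr
        exact ⟨l, Finset.mem_range.mpr hl2, (hchain l).mem_toFinset.mpr ⟨hl3, hl4⟩⟩
      have h5 : i < 2 ^ nseq (K m) := hGlt _ _ hiG
      have h6 : 2 ^ nseq (K m) ≤ 2 ^ m := Nat.pow_le_pow_right (by norm_num) (hK1 m)
      omega
end

section
/- The poset ℙ₂ is countably closed: for every sequence f₀, f₁, f₂, … of elements of ℙ₂ such that f_{k+1} ⊇* f_k for every k (i.e. f_k ∖ f_{k+1} is finite), there exists f ∈ ℙ₂ such that f ⊇* f_k for every k. -/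
/-- A partial function from ℕ to ℕ is represented as `f : ℕ → Option ℕ`,
with `dom f = {n | f n ≠ none}`. `memP2 f` says `f ∈ ℙ₂`: `f` is an injective
partial function such that (1) `dom f = ran f`; (2) for all `i ∈ dom f` and all `n`,
`f i ∈ [2^n, 2^{n+1})` iff `i ∈ [2^n, 2^{n+1})`; (3) `limsup_n |[2^n,2^{n+1}) ∖ dom f| = ∞`;
(4) for all `i ∈ dom f`, `f (f i) = i` and `f i ≠ i`. -/
def memP2 (f : ℕ → Option ℕ) : Prop :=
  (∀ i j k : ℕ, f i = some k → f j = some k → i = j) ∧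
  (∀ j : ℕ, (∃ i, f i = some j) ↔ f j ≠ none) ∧
  (∀ i j n : ℕ, f i = some j →
    (j ∈ Set.Ico (2 ^ n) (2 ^ (n + 1)) ↔ i ∈ Set.Ico (2 ^ n) (2 ^ (n + 1)))) ∧
  (∀ m N : ℕ, ∃ n ≥ N, m ≤ ((Finset.Ico (2 ^ n) (2 ^ (n + 1))).filter
    (fun i => f i = none)).card) ∧
  (∀ i j : ℕ, f i = some j → f j = some i ∧ j ≠ i)

/-- The poset ℙ₂ is countably closed: for every sequence `F 0, F 1, F 2, …` of elements
of ℙ₂ such that `F (k+1) ⊇* F k` for every `k` (i.e. `F k ∖ F (k+1)` is finite), there is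
`f ∈ ℙ₂` with `f ⊇* F k` for every `k`. -/
theorem P2_countably_closed (F : ℕ → ℕ → Option ℕ)
    (hF : ∀ k, memP2 (F k))
    (hchain : ∀ k, {n : ℕ | F k n ≠ none ∧ F (k + 1) n ≠ F k n}.Finite) :
    ∃ f : ℕ → Option ℕ, memP2 f ∧
      ∀ k, {n : ℕ | F k n ≠ none ∧ f n ≠ F k n}.Finite := by
  classical
  -- cumulative finiteness along the chain
  have hchain' : ∀ j m : ℕ, j ≤ m → {n : ℕ | F j n ≠ none ∧ F m n ≠ F j n}.Finite := by
    intro j m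
    induction m with
    | zero =>
      intro hj
      interval_cases j
      have : {n : ℕ | F 0 n ≠ none ∧ F 0 n ≠ F 0 n} = ∅ := by
        ext n; simp
      rw [this]; exact Set.finite_empty
    | succ m ih =>
      intro hj
      rcases Nat.lt_or_ge j (m + 1) with h | h
      · have hj' : j ≤ m := Nat.lt_succ_iff.mp h
        apply Set.Finite.subset ((ih hj').union (hchain m))
        intro n hn
        rcases hn with ⟨h1, h2⟩
        by_cases hc : F m n = F j n
        · right
          exact ⟨by rw [hc]; exact h1, by rw [hc]; exact h2⟩
        · left; exact ⟨h1, hc⟩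
      · have : j = m + 1 := le_antisymm hj h
        subst this
        have : {n : ℕ | F (m+1) n ≠ none ∧ F (m+1) n ≠ F (m+1) n} = ∅ := by
          ext n; simp
        rw [this]; exact Set.finite_empty
  -- thresholds: beyond `T r`, `F r` extends every `F j`, `j ≤ r`
  have hT : ∀ r : ℕ, ∃ T : ℕ, ∀ i, T ≤ i → ∀ j ≤ r, F j i ≠ none → F r i = F j i := by
    intro r
    have hfin : {n : ℕ | ∃ j ≤ r, F j n ≠ none ∧ F r n ≠ F j n}.Finite := by
      have hsub : {n : ℕ | ∃ j ≤ r, F j n ≠ none ∧ F r n ≠ F j n} ⊆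
          ⋃ j ∈ Finset.range (r + 1), {n : ℕ | F j n ≠ none ∧ F r n ≠ F j n} := by
        intro n hn
        rcases hn with ⟨j, hj, hn1, hn2⟩
        exact Set.mem_biUnion (Finset.mem_range.mpr (Nat.lt_succ_of_le hj)) ⟨hn1, hn2⟩
      exact Set.Finite.subset
        (Set.Finite.biUnion (Finset.range (r + 1)).finite_toSet
          (fun j hj => hchain' j r (Nat.lt_succ_iff.mp (Finset.mem_range.mp hj)))) hsub
    obtain ⟨T, hTb⟩ := hfin.bddAbove
    refine ⟨T + 1, fun i hi j hj h1 => ?_⟩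
    by_contra h2
    have : i ≤ T := hTb ⟨j, hj, h1, h2⟩
    omega
  choose T hTspec using hT
  -- choice of blocks
  have key : ∀ r N : ℕ, ∃ n, N ≤ n ∧ T r ≤ n ∧
      r ≤ ((Finset.Ico (2 ^ n) (2 ^ (n + 1))).filter (fun i => F r i = none)).card := by
    intro r N
    obtain ⟨n, hn, hc⟩ := (hF r).2.2.2.1 r (max N (T r))
    exact ⟨n, le_trans (le_max_left _ _) hn, le_trans (le_max_right _ _) hn, hc⟩
  choose g hg1 hg2 hg3 using key
  set nSeq : ℕ → ℕ := fun r => Nat.rec (g 0 0) (fun r prev => g (r + 1) (prev + 1)) r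
    with hnSeq
  have hnSeq_succ : ∀ r, nSeq (r + 1) = g (r + 1) (nSeq r + 1) := fun r => rfl
  have hmono : StrictMono nSeq := by
    apply strictMono_nat_of_lt_succ
    intro r
    have := hg1 (r + 1) (nSeq r + 1)
    rw [hnSeq_succ r]
    omega
  have hnT : ∀ r, T r ≤ nSeq r := by
    intro r
    cases r with
    | zero => exact hg2 0 0
    | succ r => rw [hnSeq_succ r]; exact hg2 (r + 1) (nSeq r + 1)
  have hnholes : ∀ r, r ≤ ((Finset.Ico (2 ^ nSeq r) (2 ^ (nSeq r + 1))).filter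
      (fun i => F r i = none)).card := by
    intro r
    cases r with
    | zero => exact hg3 0 0
    | succ r => rw [hnSeq_succ r]; exact hg3 (r + 1) (nSeq r + 1)
  have hnge : ∀ r, r ≤ nSeq r := fun r => hmono.le_apply
  -- stage assigned to block n
  set K : ℕ → ℕ := fun n => Nat.findGreatest (fun r => nSeq r ≤ n) n with hK
  have hK1 : ∀ r n, nSeq r ≤ n → r ≤ K n := by
    intro r n h
    exact Nat.le_findGreatest (le_trans (hnge r) h) h
  have hK2 : ∀ n, K n ≠ 0 → nSeq (K n) ≤ n := by
    intro n h
    exact (Nat.findGreatest_eq_iff.mp (rfl : Nat.findGreatest (fun r => nSeq r ≤ n) n = K n)).2.1 h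
  have hK3 : ∀ r, K (nSeq r) = r := by
    intro r
    have h1 : r ≤ K (nSeq r) := hK1 r (nSeq r) le_rfl
    have h2 : K (nSeq r) ≤ r := by
      by_contra hc
      push_neg at hc
      have hne : K (nSeq r) ≠ 0 := by omega
      have := hK2 (nSeq r) hne
      have := hmono hc
      omega
    omega
  -- the fusion
  set f : ℕ → Option ℕ := fun i => F (K (Nat.log 2 i)) i with hf
  -- `F k 0 = none` for every `k`
  have hF0 : ∀ k, F k 0 = none := by
    intro k
    by_contra h
    obtain ⟨v, hv⟩ := Option.ne_none_iff_exists'.mp h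
    obtain ⟨hv2, hv3⟩ := (hF k).2.2.2.2 0 v hv
    have hv1 : 1 ≤ v := Nat.pos_of_ne_zero hv3
    have hmem : v ∈ Set.Ico (2 ^ Nat.log 2 v) (2 ^ (Nat.log 2 v + 1)) :=
      ⟨Nat.pow_log_le_self 2 (by omega), Nat.lt_pow_succ_log_self one_lt_two v⟩
    have := ((hF k).2.2.1 0 v (Nat.log 2 v) hv).mp hmem
    have h0 : (0 : ℕ) < 2 ^ Nat.log 2 v := Nat.pow_pos (by norm_num)
    exact absurd this.1 (by omega)
  -- block preservation for each `F k`
  have hlog : ∀ k i j, F k i = some j → Nat.log 2 j = Nat.log 2 i ∧ i ≠ 0 ∧ j ≠ 0 := by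
    intro k i j hij
    have hi0 : i ≠ 0 := by
      intro h; rw [h, hF0 k] at hij; exact nomatch hij
    obtain ⟨hji, _⟩ := (hF k).2.2.2.2 i j hij
    have hj0 : j ≠ 0 := by
      intro h; rw [h, hF0 k] at hji; exact nomatch hji
    have hmem : i ∈ Set.Ico (2 ^ Nat.log 2 i) (2 ^ (Nat.log 2 i + 1)) :=
      ⟨Nat.pow_log_le_self 2 hi0, Nat.lt_pow_succ_log_self one_lt_two i⟩
    have hjmem := ((hF k).2.2.1 i j (Nat.log 2 i) hij).mpr hmem
    exact ⟨Nat.log_eq_of_pow_le_of_lt_pow hjmem.1 hjmem.2, hi0, hj0⟩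
  -- key symmetry of the fusion
  have hsym : ∀ i j, f i = some j →
      f j = some i ∧ j ≠ i ∧ Nat.log 2 j = Nat.log 2 i := by
    intro i j hij
    have hij' : F (K (Nat.log 2 i)) i = some j := hij
    obtain ⟨hlg, _, _⟩ := hlog _ _ _ hij'
    obtain ⟨hji, hne⟩ := (hF (K (Nat.log 2 i))).2.2.2.2 i j hij'
    refine ⟨?_, hne, hlg⟩
    show F (K (Nat.log 2 j)) j = some i
    rw [hlg]; exact hji
  refine ⟨f, ⟨?_, ?_, ?_, ?_, ?_⟩, ?_⟩
  · -- injectivity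
    intro i j v hiv hjv
    obtain ⟨_, _, hlgi⟩ := hsym i v hiv
    obtain ⟨_, _, hlgj⟩ := hsym j v hjv
    have : K (Nat.log 2 i) = K (Nat.log 2 j) := by rw [← hlgi, hlgj]
    exact (hF (K (Nat.log 2 i))).1 i j v hiv (by rw [this]; exact hjv)
  · -- dom = ran
    intro j
    constructor
    · rintro ⟨i, hij⟩
      rw [(hsym i j hij).1]
      exact Option.some_ne_none i
    · intro h
      obtain ⟨v, hv⟩ := Option.ne_none_iff_exists'.mp h
      exact ⟨v, (hsym j v hv).1⟩
  · -- block preservation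
    intro i j n hij
    exact (hF (K (Nat.log 2 i))).2.2.1 i j n hij
  · -- limsup of holes
    intro m N
    refine ⟨nSeq (max m N), le_trans (le_max_right m N) (hnge _), ?_⟩
    have hfilt : (Finset.Ico (2 ^ nSeq (max m N)) (2 ^ (nSeq (max m N) + 1))).filter
        (fun i => f i = none) =
        (Finset.Ico (2 ^ nSeq (max m N)) (2 ^ (nSeq (max m N) + 1))).filter
        (fun i => F (max m N) i = none) := by
      apply Finset.filter_congr
      intro i hi
      rw [Finset.mem_Ico] at hi
      have hi0 : i ≠ 0 := by
        have : (0:ℕ) < 2 ^ nSeq (max m N) := Nat.pow_pos (by norm_num)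
        omega
      have hlgi : Nat.log 2 i = nSeq (max m N) :=
        Nat.log_eq_of_pow_le_of_lt_pow hi.1 hi.2
      have : f i = F (max m N) i := by rw [hf]; simp only [hlgi, hK3]
      rw [this]
    rw [hfilt]
    exact le_trans (le_max_left m N) (hnholes (max m N))
  · -- involution without fixed points
    intro i j hij
    exact ⟨(hsym i j hij).1, (hsym i j hij).2.1⟩
  · -- f extends each F k modulo finite
    intro k
    apply Set.Finite.subset (Set.finite_Iio (2 ^ nSeq k))
    intro i hi
    rcases hi with ⟨h1, h2⟩
    by_contra hc
    simp only [Set.mem_Iio, not_lt] at hc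
    have hi0 : i ≠ 0 := by
      have : (0:ℕ) < 2 ^ nSeq k := Nat.pow_pos (by norm_num)
      omega
    set n := Nat.log 2 i with hn
    have hnk : nSeq k ≤ n := Nat.le_log_of_pow_le one_lt_two hc
    have hkK : k ≤ K n := hK1 k n hnk
    rcases Nat.eq_zero_or_pos (K n) with h0 | hpos
    · have : k = 0 := by omega
      subst this
      exact h2 (by rw [hf]; simp only [← hn, h0])
    · have hns : nSeq (K n) ≤ n := hK2 n (by omega)
      have hTi : T (K n) ≤ i := by
        have h1' : 2 ^ n ≤ i := Nat.pow_log_le_self 2 hi0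
        have h2' : nSeq (K n) < 2 ^ nSeq (K n) := Nat.lt_two_pow_self
        have h3' : (2:ℕ) ^ nSeq (K n) ≤ 2 ^ n := Nat.pow_le_pow_right (by norm_num) hns
        have := hnT (K n)
        omega
      have := hTspec (K n) i hTi k hkK h1
      exact h2 (by rw [hf]; simp only [← hn]; exact this)
end

section
/- Standard conditions are dense in ℙ₀: for every q ∈ ℙ₀ there exists p ∈ ℙ₀ with p ⊇ q such that for every ℓ > 0 the set of n with 1 ≤ |[2^n,2^{n+1}) ∖ dom(p)| ≤ ℓ is finite (equivalently, the sizes |[2^n,2^{n+1}) ∖ dom(p)| over those n for which this set is nonempty diverge to infinity). -/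
/-- Standard conditions are dense in ℙ₀: for every `q ∈ ℙ₀` there is `p ∈ ℙ₀` with
`p ⊇ q` such that for every `ℓ > 0` the set of `n` with
`1 ≤ |[2^n,2^{n+1}) ∖ dom p| ≤ ℓ` is finite. -/
theorem standard_conditions_dense (q : ℕ → Option Bool) (hq : memP0 q) :
    ∃ p : ℕ → Option Bool, memP0 p ∧ (∀ n b, q n = some b → p n = some b) ∧
      ∀ ℓ : ℕ, 0 < ℓ →
        {n : ℕ | 1 ≤ ((Finset.Ico (2 ^ n) (2 ^ (n + 1))).filter
            (fun i => p i = none)).card ∧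
          ((Finset.Ico (2 ^ n) (2 ^ (n + 1))).filter
            (fun i => p i = none)).card ≤ ℓ}.Finite := by
  classical
  obtain ⟨hP1, hsub, hiff⟩ := hq
  choose F hF1 hF2 using hP1
  set cQ : ℕ → ℕ := fun n => ((Finset.Ico (2 ^ n) (2 ^ (n + 1))).filter
    (fun i => q i = none)).card with hcQ
  let nseq : ℕ → ℕ := fun k => Nat.rec (F 0 0) (fun k ih => F (k + 1) (ih + 1)) k
  have hseq_succ : ∀ k, nseq (k + 1) = F (k + 1) (nseq k + 1) := fun k => rfl
  have hmono : ∀ k, nseq k + 1 ≤ nseq (k + 1) := by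
    intro k; rw [hseq_succ]; exact hF1 (k + 1) (nseq k + 1)
  have hge : ∀ k, k ≤ nseq k := by
    intro k
    induction k with
    | zero => exact Nat.zero_le _
    | succ k ih => exact le_trans (Nat.succ_le_succ ih) (hmono k)
  have hcard : ∀ k, k ≤ cQ (nseq k) := by
    intro k
    cases k with
    | zero => exact Nat.zero_le _
    | succ k => rw [hseq_succ]; exact hF2 (k + 1) (nseq k + 1)
  set K : Set ℕ := Set.range nseq with hK
  set p : ℕ → Option Bool := fun i =>
    if q i = none then
      (if Nat.log 2 i ∈ K then none
       else if ∀ j ∈ Finset.Ico (2 ^ (Nat.log 2 i)) i, q j ≠ none then some true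
       else some false)
    else q i with hp
  have hpdef : ∀ i, p i =
      if q i = none then
        (if Nat.log 2 i ∈ K then none
         else if ∀ j ∈ Finset.Ico (2 ^ (Nat.log 2 i)) i, q j ≠ none then some true
         else some false)
      else q i := fun i => rfl
  have hblk : ∀ {n i : ℕ}, 2 ^ n ≤ i → i < 2 ^ (n + 1) → Nat.log 2 i = n := by
    intro n i h1 h2
    exact Nat.log_eq_of_pow_le_of_lt_pow h1 h2
  -- on blocks in K, p agrees with q
  have hpK : ∀ n, n ∈ K → ∀ i, 2 ^ n ≤ i → i < 2 ^ (n + 1) → p i = q i := by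
    intro n hn i h1 h2
    rw [hpdef i]
    by_cases hqi : q i = none
    · simp [hqi, hblk h1 h2, hn]
    · simp [hqi]
  -- on blocks not in K, p has no holes
  have hpNK : ∀ n, n ∉ K → ∀ i, 2 ^ n ≤ i → i < 2 ^ (n + 1) → p i ≠ none := by
    intro n hn i h1 h2
    rw [hpdef i]
    by_cases hqi : q i = none
    · simp only [hqi, if_true, hblk h1 h2, hn, if_false]
      split <;> simp
    · simp [hqi]
  -- hole counts of p on blocks in K agree with q
  have hcount : ∀ n, n ∈ K →
      ((Finset.Ico (2 ^ n) (2 ^ (n + 1))).filter (fun i => p i = none)).card = cQ n := by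
    intro n hn
    rw [hcQ]
    congr 1
    apply Finset.filter_congr
    intro i hi
    rw [Finset.mem_Ico] at hi
    rw [hpK n hn i hi.1 hi.2]
  -- if a block not in K has a q-hole, p on this block agrees with q off holes,
  -- and has no true in q
  have hnotrue : ∀ n, (∃ i ∈ Finset.Ico (2 ^ n) (2 ^ (n + 1)), q i = none) →
      ∀ i, 2 ^ n ≤ i → i < 2 ^ (n + 1) → q i ≠ some true := by
    intro n ⟨j, hj, hjnone⟩ i h1 h2 hqi
    rw [Finset.mem_Ico] at hj
    exact ((hiff n).1 ⟨i, hqi, h1, h2⟩) j ⟨hj.1, hj.2⟩ hjnone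
  refine ⟨p, ⟨?_, ?_, ?_⟩, ?_, ?_⟩
  · -- memP1
    intro m N
    refine ⟨nseq (max m N), le_trans (le_max_right m N) (hge _), ?_⟩
    rw [hcount _ ⟨max m N, rfl⟩]
    exact le_trans (le_max_left m N) (hcard _)
  · -- subsingleton
    intro n x hx y hy
    obtain ⟨hx1, hx2⟩ := hx
    obtain ⟨hy1, hy2⟩ := hy
    simp only [Set.mem_setOf_eq] at hx1 hy1
    obtain ⟨hx2a, hx2b⟩ := hx2
    obtain ⟨hy2a, hy2b⟩ := hy2
    by_cases hn : n ∈ K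
    · exact hsub n ⟨by rwa [hpK n hn x hx2a hx2b] at hx1, hx2a, hx2b⟩
        ⟨by rwa [hpK n hn y hy2a hy2b] at hy1, hy2a, hy2b⟩
    · by_cases hhole : ∃ i ∈ Finset.Ico (2 ^ n) (2 ^ (n + 1)), q i = none
      · have key : ∀ z, 2 ^ n ≤ z → z < 2 ^ (n + 1) → p z = some true →
            q z = none ∧ ∀ j ∈ Finset.Ico (2 ^ n) z, q j ≠ none := by
          intro z hz1 hz2 hpz
          rw [hpdef z, hblk hz1 hz2] at hpz
          by_cases hqz : q z = none
          · rw [if_pos hqz, if_neg hn] at hpz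
            refine ⟨hqz, ?_⟩
            by_contra hc
            rw [if_neg hc] at hpz
            simp at hpz
          · rw [if_neg hqz] at hpz
            exact absurd hpz (hnotrue n hhole z hz1 hz2)
        obtain ⟨hxn, hxm⟩ := key x hx2a hx2b hx1
        obtain ⟨hyn, hym⟩ := key y hy2a hy2b hy1
        rcases lt_trichotomy x y with h | h | h
        · exact absurd hxn (hym x (Finset.mem_Ico.2 ⟨hx2a, h⟩))
        · exact h
        · exact absurd hyn (hxm y (Finset.mem_Ico.2 ⟨hy2a, h⟩))
      · push_neg at hhole
        have hpq : ∀ z, 2 ^ n ≤ z → z < 2 ^ (n + 1) → p z = q z := by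
          intro z h1 h2
          rw [hpdef z, if_neg (hhole z (Finset.mem_Ico.2 ⟨h1, h2⟩))]
        exact hsub n ⟨by rwa [hpq x hx2a hx2b] at hx1, hx2a, hx2b⟩
          ⟨by rwa [hpq y hy2a hy2b] at hy1, hy2a, hy2b⟩
  · -- nonempty iff full
    intro n
    by_cases hn : n ∈ K
    · have hset : {i | p i = some true} ∩ Set.Ico (2 ^ n) (2 ^ (n + 1)) =
          {i | q i = some true} ∩ Set.Ico (2 ^ n) (2 ^ (n + 1)) := by
        ext i
        simp only [Set.mem_inter_iff, Set.mem_setOf_eq, Set.mem_Ico]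
        constructor
        · rintro ⟨h1, h2⟩; exact ⟨by rwa [hpK n hn i h2.1 h2.2] at h1, h2⟩
        · rintro ⟨h1, h2⟩; exact ⟨by rwa [hpK n hn i h2.1 h2.2], h2⟩
      rw [hset]
      constructor
      · intro h i hi
        rw [hpK n hn i hi.1 hi.2]
        exact (hiff n).1 h i hi
      · intro h
        refine (hiff n).2 fun i hi => ?_
        rw [← hpK n hn i hi.1 hi.2]
        exact h i hi
    · by_cases hhole : ∃ i ∈ Finset.Ico (2 ^ n) (2 ^ (n + 1)), q i = none
      · constructor
        · intro _ i hi
          exact hpNK n hn i hi.1 hi.2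
        · intro _
          set H := (Finset.Ico (2 ^ n) (2 ^ (n + 1))).filter (fun i => q i = none) with hH
          have hHne : H.Nonempty := by
            obtain ⟨j, hj, hjn⟩ := hhole
            exact ⟨j, Finset.mem_filter.2 ⟨hj, hjn⟩⟩
          set h := H.min' hHne with hh
          have hhmem := H.min'_mem hHne
          rw [Finset.mem_filter, Finset.mem_Ico] at hhmem
          obtain ⟨⟨hh1, hh2⟩, hhn⟩ := hhmem
          refine ⟨h, ?_, hh1, hh2⟩
          show p h = some true
          rw [hpdef h, hblk hh1 hh2, if_pos hhn, if_neg hn, if_pos ?_]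
          intro j hj hjn
          rw [Finset.mem_Ico] at hj
          have : h ≤ j := H.min'_le j (Finset.mem_filter.2
            ⟨Finset.mem_Ico.2 ⟨hj.1, lt_trans hj.2 hh2⟩, hjn⟩)
          omega
      · push_neg at hhole
        have hpq : ∀ z, 2 ^ n ≤ z → z < 2 ^ (n + 1) → p z = q z := by
          intro z h1 h2
          rw [hpdef z, if_neg (hhole z (Finset.mem_Ico.2 ⟨h1, h2⟩))]
        have hset : {i | p i = some true} ∩ Set.Ico (2 ^ n) (2 ^ (n + 1)) =
            {i | q i = some true} ∩ Set.Ico (2 ^ n) (2 ^ (n + 1)) := by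
          ext i
          simp only [Set.mem_inter_iff, Set.mem_setOf_eq, Set.mem_Ico]
          constructor
          · rintro ⟨h1, h2⟩; exact ⟨by rwa [hpq i h2.1 h2.2] at h1, h2⟩
          · rintro ⟨h1, h2⟩; exact ⟨by rwa [hpq i h2.1 h2.2], h2⟩
        rw [hset]
        constructor
        · intro h i hi
          rw [hpq i hi.1 hi.2]
          exact (hiff n).1 h i hi
        · intro h
          refine (hiff n).2 fun i hi => ?_
          rw [← hpq i hi.1 hi.2]
          exact h i hi
  · -- extension
    intro n b hnb
    rw [hpdef n, hnb]
    simp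
  · -- finiteness
    intro ℓ _
    apply Set.Finite.subset ((Set.finite_Iic ℓ).image nseq)
    intro n hn
    obtain ⟨hn1, hn2⟩ := hn
    have hnK : n ∈ K := by
      by_contra hnK
      have : ((Finset.Ico (2 ^ n) (2 ^ (n + 1))).filter (fun i => p i = none)).card = 0 := by
        rw [Finset.card_eq_zero, Finset.filter_eq_empty_iff]
        intro i hi
        rw [Finset.mem_Ico] at hi
        exact hpNK n hnK i hi.1 hi.2
      omega
    obtain ⟨k, hk⟩ := hnK
    refine ⟨k, ?_, hk⟩
    have := hcard k
    rw [hk] at this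
    rw [hcount n ⟨k, hk⟩] at hn2
    exact Set.mem_Iic.2 (le_trans this hn2)
end

section
/- For every natural number ℓ there exists an ℓ-structure; that is, there exists a family {a_x : x ∈ 𝒩_ℓ} of two-element subsets of ℕ such that, setting Y_ρ = ⋃{a_x : x ∈ 𝒩_ℓ and x_j = ρ_j for all j in the domain of ρ} for each partial index ρ defined on a final segment {i, i+1, …, ℓ} of {0,…,ℓ} (with Y_∅ denoting the union of all the pairs a_x), the following hold for every i ≤ ℓ and every partial index ρ defined on {i+1,…,ℓ} (for i = ℓ, ρ is empty): (a) the sets Y_{ρ⌢m} for m < L_i are pairwise disjoint, where ρ⌢m denotes ρ extended by assigning value m at coordinate i; (b) Y_ρ = ⋃_{m < L_i} Y_{ρ⌢m}, so in particular every Y_{ρ⌢k} with k < n_i is contained in this union; (c) for every Y ⊆ Y_ρ, if Y ∩ Y_{ρ⌢m} ≠ ∅ for every m < L_i, then there exists k < n_i with Y_{ρ⌢k} ⊆ Y. Moreover one can arrange that Y_∅ is an initial segment of ℕ of cardinality at most L_{ℓ+1}. -/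
/-- The sequence `L`: `L 0 = 2` and `L (j+1) = 2·n 0·n 1⋯n j` where
`n j = L j + (L j)^(L j)`; equivalently `L (j+1) = L j * n j`. -/
def Lseq : ℕ → ℕ
  | 0 => 2
  | j + 1 => Lseq j * (Lseq j + Lseq j ^ Lseq j)

/-- `n j = L j + (L j)^(L j)`. -/
def nseq (j : ℕ) : ℕ := Lseq j + Lseq j ^ Lseq j

/-- Given a family of pairs `a x` indexed by sequences `x = (x 0, …, x ℓ)` with
`x j < n j`, the set `Yset ℓ a i ρ` is the union of all pairs `a x` over those
indices `x` agreeing with `ρ` on all coordinates `j` with `i ≤ j ≤ ℓ`. -/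
def Yset (ℓ : ℕ) (a : (Fin (ℓ + 1) → ℕ) → Finset ℕ) (i : ℕ)
    (ρ : Fin (ℓ + 1) → ℕ) : Set ℕ :=
  ⋃ x ∈ {x : Fin (ℓ + 1) → ℕ | (∀ j, x j < nseq (j : ℕ)) ∧
    ∀ j : Fin (ℓ + 1), i ≤ (j : ℕ) → x j = ρ j}, ((a x : Finset ℕ) : Set ℕ)

/-- Generalized version of `Yset` for an arbitrary number `L` of coordinates. -/
def Yset' (L : ℕ) (a : (Fin L → ℕ) → Finset ℕ) (i : ℕ) (ρ : Fin L → ℕ) : Set ℕ :=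
  ⋃ x ∈ {x : Fin L → ℕ | (∀ j, x j < nseq (j : ℕ)) ∧
    ∀ j : Fin L, i ≤ (j : ℕ) → x j = ρ j}, ((a x : Finset ℕ) : Set ℕ)

/-- Size of the ground set of an `L`-coordinate structure. -/
def Sgr : ℕ → ℕ
  | 0 => 2
  | L + 1 => Lseq L * Sgr L

lemma two_le_Lseq (j : ℕ) : 2 ≤ Lseq j := by
  induction j with
  | zero => simp [Lseq]
  | succ j ih =>
    have h1 : 1 ≤ Lseq j ^ Lseq j := Nat.one_le_pow _ _ (by omega)
    calc 2 ≤ Lseq j * 1 := by omega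
    _ ≤ Lseq j * (Lseq j + Lseq j ^ Lseq j) := by
        exact Nat.mul_le_mul_left _ (by omega)
    _ = Lseq (j+1) := rfl

lemma Lseq_le_nseq (j : ℕ) : Lseq j ≤ nseq j := Nat.le_add_right _ _

lemma Lseq_lt_nseq (j : ℕ) : Lseq j < nseq j := by
  have := two_le_Lseq j
  have h1 : 1 ≤ Lseq j ^ Lseq j := Nat.one_le_pow _ _ (by omega)
  unfold nseq; omega

lemma Sgr_pos (L : ℕ) : 0 < Sgr L := by
  induction L with
  | zero => simp [Sgr]
  | succ L ih =>
    have := two_le_Lseq L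
    exact Nat.mul_pos (by omega) ih

lemma Sgr_le_Lseq (L : ℕ) : Sgr L ≤ Lseq L := by
  induction L with
  | zero => simp [Sgr, Lseq]
  | succ L ih =>
    calc Sgr (L+1) = Lseq L * Sgr L := rfl
    _ ≤ Lseq L * nseq L := Nat.mul_le_mul_left _ (ih.trans (Lseq_le_nseq L))
    _ = Lseq (L+1) := rfl

lemma mem_Yset' {L : ℕ} {a : (Fin L → ℕ) → Finset ℕ} {i : ℕ} {ρ : Fin L → ℕ} {y : ℕ} :
    y ∈ Yset' L a i ρ ↔ ∃ x : Fin L → ℕ, (∀ j, x j < nseq (j : ℕ)) ∧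
      (∀ j : Fin L, i ≤ (j : ℕ) → x j = ρ j) ∧ y ∈ a x := by
  simp [Yset']; tauto

lemma Yset'_top_eq {L : ℕ} {a : (Fin L → ℕ) → Finset ℕ} {ρ ρ' : Fin L → ℕ} :
    Yset' L a L ρ = Yset' L a L ρ' := by
  have : ∀ j : Fin L, ¬ (L ≤ (j : ℕ)) := fun j => by have := j.isLt; omega
  ext y
  rw [mem_Yset', mem_Yset']
  constructor <;> rintro ⟨x, h1, _, h3⟩ <;>
    exact ⟨x, h1, fun j hj => absurd hj (this j), h3⟩

lemma Yset'_subset_top {L : ℕ} {a : (Fin L → ℕ) → Finset ℕ} {i : ℕ} {ρ ρ' : Fin L → ℕ} :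
    Yset' L a i ρ ⊆ Yset' L a L ρ' := by
  intro y hy
  rw [mem_Yset'] at hy ⊢
  obtain ⟨x, hx1, _, hx3⟩ := hy
  exact ⟨x, hx1, fun j hj => absurd hj (by have := j.isLt; omega), hx3⟩

lemma a_subset_top {L : ℕ} {a : (Fin L → ℕ) → Finset ℕ} {x : Fin L → ℕ}
    (hx : ∀ j, x j < nseq (j : ℕ)) {ρ : Fin L → ℕ} :
    (a x : Set ℕ) ⊆ Yset' L a L ρ := by
  intro y hy
  rw [mem_Yset']
  exact ⟨x, hx, fun j hj => absurd hj (by have := j.isLt; omega), hy⟩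

/-- The embedding of the `L`-structure ground set determined by the extra coordinate
value `k`: for `k < Lseq L` it is the shift into the `k`-th block; for `k ≥ Lseq L`
it sends `p` into block `p` at the position given by the `p`-th base-`Sgr L` digit
of `k - Lseq L`. -/
def phi (L k p : ℕ) : ℕ :=
  if k < Lseq L then k * Sgr L + p
  else p * Sgr L + (k - Lseq L) / Sgr L ^ p % Sgr L

lemma block_div {A : ℕ} (hA : 0 < A) {p r : ℕ} (hr : r < A) : (p * A + r) / A = p := by
  rw [add_comm, Nat.add_mul_div_right _ _ hA, Nat.div_eq_of_lt hr, zero_add]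

lemma phi_lt {L k p : ℕ} (hk : k < nseq L) (hp : p < Sgr L) :
    phi L k p < Lseq L * Sgr L := by
  unfold phi
  split
  · calc _ < k * Sgr L + Sgr L := by omega
    _ = (k+1) * Sgr L := by ring
    _ ≤ Lseq L * Sgr L := Nat.mul_le_mul_right _ (by omega)
  · have h1 : (k - Lseq L) / Sgr L ^ p % Sgr L < Sgr L := Nat.mod_lt _ (Sgr_pos L)
    calc _ < p * Sgr L + Sgr L := by omega
    _ = (p+1) * Sgr L := by ring
    _ ≤ Lseq L * Sgr L := Nat.mul_le_mul_right _ (by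
        have := Sgr_le_Lseq L; omega)

lemma phi_inj {L k p q : ℕ} (hp : p < Sgr L) (hq : q < Sgr L)
    (h : phi L k p = phi L k q) : p = q := by
  unfold phi at h
  split at h
  · omega
  · have hA := Sgr_pos L
    have h1 : (k - Lseq L) / Sgr L ^ p % Sgr L < Sgr L := Nat.mod_lt _ hA
    have h2 : (k - Lseq L) / Sgr L ^ q % Sgr L < Sgr L := Nat.mod_lt _ hA
    have := congrArg (· / Sgr L) h
    simpa [block_div hA h1, block_div hA h2] using this

/-- One-step extension of a structure. -/
def ext (L : ℕ) (a : (Fin L → ℕ) → Finset ℕ) : (Fin (L + 1) → ℕ) → Finset ℕ :=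
  fun x => (a (fun j => x j.castSucc)).image (phi L (x (Fin.last L)))

/-- Transport lemma: for `i ≤ L`, the `Y`-sets of the extended structure are images
under `phi` of `Y`-sets of the original structure. -/
lemma Yset'_ext (L : ℕ) (a : (Fin L → ℕ) → Finset ℕ) {i : ℕ} (hi : i ≤ L)
    (ρ : Fin (L + 1) → ℕ) :
    Yset' (L + 1) (ext L a) i ρ =
      if ρ (Fin.last L) < nseq L then
        phi L (ρ (Fin.last L)) '' Yset' L a i (fun j => ρ j.castSucc)
      else ∅ := by
  ext y
  rw [mem_Yset']
  constructor
  · rintro ⟨x, hx1, hx2, hx3⟩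
    have hlast : x (Fin.last L) = ρ (Fin.last L) := hx2 (Fin.last L) (by simpa using hi)
    have hρn : ρ (Fin.last L) < nseq L := by
      rw [← hlast]; exact hx1 (Fin.last L)
    rw [if_pos hρn]
    unfold ext at hx3
    rw [Finset.mem_image] at hx3
    obtain ⟨p, hp1, hp2⟩ := hx3
    refine ⟨p, ?_, by rw [← hp2, hlast]⟩
    rw [mem_Yset']
    refine ⟨fun j => x j.castSucc, fun j => by simpa using hx1 j.castSucc,
      fun j hj => ?_, hp1⟩
    exact hx2 j.castSucc (by simpa using hj)
  · intro hy
    by_cases hρn : ρ (Fin.last L) < nseq L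
    · rw [if_pos hρn] at hy
      obtain ⟨p, hp1, hp2⟩ := hy
      rw [mem_Yset'] at hp1
      obtain ⟨x', hx1, hx2, hx3⟩ := hp1
      refine ⟨Fin.snoc x' (ρ (Fin.last L)), fun j => ?_, fun j hj => ?_, ?_⟩
      · rcases Fin.eq_castSucc_or_eq_last j with ⟨j', rfl⟩ | rfl
        · simpa [Fin.snoc_castSucc] using hx1 j'
        · simpa [Fin.snoc_last] using hρn
      · rcases Fin.eq_castSucc_or_eq_last j with ⟨j', rfl⟩ | rfl
        · simpa [Fin.snoc_castSucc] using hx2 j' (by simpa using hj)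
        · simp [Fin.snoc_last]
      · unfold ext
        rw [Finset.mem_image]
        refine ⟨p, ?_, ?_⟩
        · convert hx3 using 2
          funext j; simp [Fin.snoc_castSucc]
        · rw [Fin.snoc_last]; exact hp2
    · rw [if_neg hρn] at hy; exact absurd hy (Set.notMem_empty y)

/-- The full ground set of the extended structure. -/
lemma Yset'_ext_top (L : ℕ) (a : (Fin L → ℕ) → Finset ℕ) (ρ : Fin (L + 1) → ℕ) :
    Yset' (L + 1) (ext L a) (L + 1) ρ =
      ⋃ k ∈ Set.Iio (nseq L), phi L k '' Yset' L a L (fun _ => 0) := by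
  ext y
  simp only [Set.mem_iUnion, Set.mem_Iio, exists_prop]
  rw [mem_Yset']
  constructor
  · rintro ⟨x, hx1, _, hx3⟩
    refine ⟨x (Fin.last L), hx1 (Fin.last L), ?_⟩
    unfold ext at hx3
    rw [Finset.mem_image] at hx3
    obtain ⟨p, hp1, hp2⟩ := hx3
    exact ⟨p, a_subset_top (fun j => by simpa using hx1 j.castSucc) hp1, hp2⟩
  · rintro ⟨k, hk, p, hp1, hp2⟩
    rw [mem_Yset'] at hp1
    obtain ⟨x', hx1, _, hx3⟩ := hp1
    refine ⟨Fin.snoc x' k, fun j => ?_, fun j hj => absurd hj (by have := j.isLt; omega), ?_⟩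
    · rcases Fin.eq_castSucc_or_eq_last j with ⟨j', rfl⟩ | rfl
      · simpa [Fin.snoc_castSucc] using hx1 j'
      · simpa [Fin.snoc_last] using hk
    · unfold ext
      rw [Finset.mem_image]
      refine ⟨p, ?_, ?_⟩
      · convert hx3 using 2
        funext j; simp [Fin.snoc_castSucc]
      · rw [Fin.snoc_last]; exact hp2

lemma sum_digits_lt {A : ℕ} (hA : 0 < A) (v : ℕ → ℕ) :
    ∀ n, (∀ b < n, v b < A) → ∑ b ∈ Finset.range n, v b * A ^ b < A ^ n := by
  intro n
  induction n with
  | zero => simp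
  | succ n ih =>
    intro hv
    rw [Finset.sum_range_succ]
    have h1 := ih (fun b hb => hv b (by omega))
    have h2 : v n * A ^ n ≤ (A - 1) * A ^ n :=
      Nat.mul_le_mul_right _ (by have := hv n (by omega); omega)
    have h3 : A ^ n + (A - 1) * A ^ n = A ^ (n + 1) := by
      have : A ^ n + (A - 1) * A ^ n = (1 + (A - 1)) * A ^ n := by ring
      have h4 : 1 + (A - 1) = A := by omega
      rw [this, pow_succ, h4, mul_comm]
    omega

lemma digit_extract {A : ℕ} (hA : 0 < A) :
    ∀ (p n : ℕ) (v : ℕ → ℕ), (∀ b < n, v b < A) → p < n →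
      (∑ b ∈ Finset.range n, v b * A ^ b) / A ^ p % A = v p := by
  intro p
  induction p with
  | zero =>
    intro n v hv hp
    obtain ⟨m, rfl⟩ : ∃ m, n = m + 1 := ⟨n - 1, by omega⟩
    rw [Finset.sum_range_succ']
    have : ∀ b, v (b + 1) * A ^ (b + 1) = (v (b + 1) * A ^ b) * A := fun b => by ring
    simp only [this]
    rw [← Finset.sum_mul, pow_zero, Nat.div_one, mul_one, add_comm,
      Nat.add_mul_mod_self_right, Nat.mod_eq_of_lt (hv 0 (by omega))]
  | succ p ih =>
    intro n v hv hp
    obtain ⟨m, rfl⟩ : ∃ m, n = m + 1 := ⟨n - 1, by omega⟩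
    have key : (∑ b ∈ Finset.range (m + 1), v b * A ^ b) / A ^ (p + 1) =
        (∑ b ∈ Finset.range m, v (b + 1) * A ^ b) / A ^ p := by
      rw [Finset.sum_range_succ']
      have : ∀ b, v (b + 1) * A ^ (b + 1) = (v (b + 1) * A ^ b) * A := fun b => by ring
      simp only [this]
      rw [← Finset.sum_mul, pow_zero, mul_one, pow_succ, mul_comm (A ^ p) A,
        ← Nat.div_div_eq_div_mul]
      have hdiv : ((∑ i ∈ Finset.range m, v (i + 1) * A ^ i) * A + v 0) / A =
          ∑ i ∈ Finset.range m, v (i + 1) * A ^ i := by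
        rw [add_comm, Nat.add_mul_div_right _ _ hA,
          Nat.div_eq_of_lt (hv 0 (by omega)), zero_add]
      rw [hdiv]
    rw [key, ih m (fun b => v (b + 1)) (fun b hb => hv (b + 1) (by omega)) (by omega)]


section CondLemmas

variable (L : ℕ) (a : (Fin L → ℕ) → Finset ℕ)

/-- The conditions at a level `i < L` of the extended structure, by transport. -/
lemma cond_lt
    (hcond : ∀ i : Fin L, ∀ ρ : Fin L → ℕ,
      (∀ m m' : ℕ, m < Lseq (i : ℕ) → m' < Lseq (i : ℕ) → m ≠ m' →
        Disjoint (Yset' L a (i : ℕ) (Function.update ρ i m))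
          (Yset' L a (i : ℕ) (Function.update ρ i m'))) ∧
      (Yset' L a ((i : ℕ) + 1) ρ =
        ⋃ m ∈ Set.Iio (Lseq (i : ℕ)), Yset' L a (i : ℕ) (Function.update ρ i m)) ∧
      (∀ Y : Set ℕ, Y ⊆ Yset' L a ((i : ℕ) + 1) ρ →
        (∀ m < Lseq (i : ℕ),
          (Y ∩ Yset' L a (i : ℕ) (Function.update ρ i m)).Nonempty) →
        ∃ k < nseq (i : ℕ), Yset' L a (i : ℕ) (Function.update ρ i k) ⊆ Y))
    (htop : ∀ ρ : Fin L → ℕ, Yset' L a L ρ = Set.Iio (Sgr L))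
    (i : Fin (L + 1)) (ρ : Fin (L + 1) → ℕ) (hiL : (i : ℕ) < L) :
    (∀ m m' : ℕ, m < Lseq (i : ℕ) → m' < Lseq (i : ℕ) → m ≠ m' →
      Disjoint (Yset' (L + 1) (ext L a) (i : ℕ) (Function.update ρ i m))
        (Yset' (L + 1) (ext L a) (i : ℕ) (Function.update ρ i m'))) ∧
    (Yset' (L + 1) (ext L a) ((i : ℕ) + 1) ρ =
      ⋃ m ∈ Set.Iio (Lseq (i : ℕ)),
        Yset' (L + 1) (ext L a) (i : ℕ) (Function.update ρ i m)) ∧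
    (∀ Y : Set ℕ, Y ⊆ Yset' (L + 1) (ext L a) ((i : ℕ) + 1) ρ →
      (∀ m < Lseq (i : ℕ),
        (Y ∩ Yset' (L + 1) (ext L a) (i : ℕ) (Function.update ρ i m)).Nonempty) →
      ∃ k < nseq (i : ℕ),
        Yset' (L + 1) (ext L a) (i : ℕ) (Function.update ρ i k) ⊆ Y) := by
  set A := Sgr L with hAdef
  have hA : 0 < A := Sgr_pos L
  have hsub : ∀ (i'' : ℕ) (ρ'' : Fin L → ℕ), Yset' L a i'' ρ'' ⊆ Set.Iio A := by
    intro i'' ρ''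
    have h1 : Yset' L a i'' ρ'' ⊆ Yset' L a L ρ'' := Yset'_subset_top
    rwa [htop ρ''] at h1
  set i' : Fin L := ⟨(i : ℕ), hiL⟩ with hi'def
  set ρ' : Fin L → ℕ := fun j => ρ j.castSucc with hρ'def
  set c : ℕ := ρ (Fin.last L) with hcdef
  have hne : Fin.last L ≠ i := by
    intro h
    have := congrArg Fin.val h
    simp only [Fin.val_last] at this
    omega
  have f1 : ∀ m : ℕ, Function.update ρ i m (Fin.last L) = c :=
    fun m => Function.update_of_ne hne m ρ
  have f2 : ∀ m : ℕ, (fun j : Fin L => Function.update ρ i m j.castSucc) =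
      Function.update ρ' i' m := by
    intro m
    funext j
    rcases eq_or_ne ((j : ℕ)) ((i : ℕ)) with hj | hj
    · have h1 : j.castSucc = i := Fin.ext (by simpa using hj)
      have h2 : j = i' := Fin.ext (by simpa using hj)
      rw [h1, h2, Function.update_self, Function.update_self]
    · have h1 : j.castSucc ≠ i := fun e => hj (by simpa using congrArg Fin.val e)
      have h2 : j ≠ i' := fun e => hj (by simpa [hi'def] using congrArg Fin.val e)
      rw [Function.update_of_ne h1, Function.update_of_ne h2]
  have E1 : ∀ m : ℕ, Yset' (L + 1) (ext L a) (i : ℕ) (Function.update ρ i m) =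
      if c < nseq L then phi L c '' Yset' L a (i : ℕ) (Function.update ρ' i' m)
      else ∅ := by
    intro m
    rw [Yset'_ext L a (le_of_lt hiL) (Function.update ρ i m), f1 m, f2 m]
  have E2 : Yset' (L + 1) (ext L a) ((i : ℕ) + 1) ρ =
      if c < nseq L then phi L c '' Yset' L a ((i : ℕ) + 1) ρ' else ∅ :=
    Yset'_ext L a hiL ρ
  by_cases hcn : c < nseq L
  · obtain ⟨ha, hb, hc⟩ := hcond i' ρ'
    have E1' : ∀ m : ℕ, Yset' (L + 1) (ext L a) (i : ℕ) (Function.update ρ i m) =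
        phi L c '' Yset' L a (i : ℕ) (Function.update ρ' i' m) :=
      fun m => (E1 m).trans (if_pos hcn)
    have E2' : Yset' (L + 1) (ext L a) ((i : ℕ) + 1) ρ =
        phi L c '' Yset' L a ((i : ℕ) + 1) ρ' := E2.trans (if_pos hcn)
    refine ⟨?_, ?_, ?_⟩
    · intro m m' hm hm' hmm
      rw [E1' m, E1' m']
      apply Set.disjoint_image_image
      intro p hp q hq he
      have hpA := hsub _ _ hp
      have hqA := hsub _ _ hq
      have hpq : p = q := phi_inj hpA hqA he
      subst hpq
      exact Set.disjoint_left.1 (ha m m' hm hm' hmm) hp hq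
    · rw [E2', hb, Set.image_iUnion₂]
      exact Set.iUnion₂_congr fun m hm => (E1' m).symm
    · intro Y hYsub hmeet
      rw [E2'] at hYsub
      set Y₀ : Set ℕ := phi L c ⁻¹' Y ∩ Set.Iio A with hY₀def
      have hY₀G : Y₀ ⊆ Yset' L a ((i : ℕ) + 1) ρ' := by
        rintro p ⟨hp1, hp2⟩
        have h3 : phi L c p ∈ phi L c '' Yset' L a ((i : ℕ) + 1) ρ' := hYsub hp1
        obtain ⟨g, hg, he⟩ := h3
        have : g = p := phi_inj (hsub _ _ hg) hp2 he
        rwa [← this]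
      have hmeet' : ∀ m < Lseq (i : ℕ),
          (Y₀ ∩ Yset' L a (i : ℕ) (Function.update ρ' i' m)).Nonempty := by
        intro m hm
        obtain ⟨y, hy1, hy2⟩ := hmeet m hm
        rw [E1' m] at hy2
        obtain ⟨p, hp, he⟩ := hy2
        refine ⟨p, ⟨?_, hsub _ _ hp⟩, hp⟩
        show phi L c p ∈ Y
        rw [he]; exact hy1
      obtain ⟨k, hk, hks⟩ := hc Y₀ hY₀G hmeet'
      refine ⟨k, hk, ?_⟩
      rw [E1' k]
      rintro y ⟨p, hp, rfl⟩
      exact (hks hp).1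
  · refine ⟨?_, ?_, ?_⟩
    · intro m m' _ _ _
      rw [E1 m, E1 m', if_neg hcn, if_neg hcn]
      simp
    · have : ∀ m : ℕ, Yset' (L + 1) (ext L a) (i : ℕ) (Function.update ρ i m) = ∅ :=
        fun m => (E1 m).trans (if_neg hcn)
      rw [E2, if_neg hcn]
      simp [this]
    · intro Y hYsub hmeet
      exfalso
      obtain ⟨y, hy1, hy2⟩ := hmeet 0 (by have := two_le_Lseq (i : ℕ); omega)
      rw [E1 0, if_neg hcn] at hy2
      exact hy2

/-- The conditions at the top level of the extended structure. -/
lemma cond_last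
    (htop : ∀ ρ : Fin L → ℕ, Yset' L a L ρ = Set.Iio (Sgr L))
    (ρ : Fin (L + 1) → ℕ) :
    (∀ m m' : ℕ, m < Lseq ((Fin.last L : Fin (L + 1)) : ℕ) →
        m' < Lseq ((Fin.last L : Fin (L + 1)) : ℕ) → m ≠ m' →
      Disjoint
        (Yset' (L + 1) (ext L a) ((Fin.last L : Fin (L + 1)) : ℕ)
          (Function.update ρ (Fin.last L) m))
        (Yset' (L + 1) (ext L a) ((Fin.last L : Fin (L + 1)) : ℕ)
          (Function.update ρ (Fin.last L) m'))) ∧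
    (Yset' (L + 1) (ext L a) (((Fin.last L : Fin (L + 1)) : ℕ) + 1) ρ =
      ⋃ m ∈ Set.Iio (Lseq ((Fin.last L : Fin (L + 1)) : ℕ)),
        Yset' (L + 1) (ext L a) ((Fin.last L : Fin (L + 1)) : ℕ)
          (Function.update ρ (Fin.last L) m)) ∧
    (∀ Y : Set ℕ, Y ⊆ Yset' (L + 1) (ext L a) (((Fin.last L : Fin (L + 1)) : ℕ) + 1) ρ →
      (∀ m < Lseq ((Fin.last L : Fin (L + 1)) : ℕ),
        (Y ∩ Yset' (L + 1) (ext L a) ((Fin.last L : Fin (L + 1)) : ℕ)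
          (Function.update ρ (Fin.last L) m)).Nonempty) →
      ∃ k < nseq ((Fin.last L : Fin (L + 1)) : ℕ),
        Yset' (L + 1) (ext L a) ((Fin.last L : Fin (L + 1)) : ℕ)
          (Function.update ρ (Fin.last L) k) ⊆ Y) := by
  simp only [Fin.val_last]
  set A := Sgr L with hAdef
  have hA : 0 < A := Sgr_pos L
  have hAL : A ≤ Lseq L := Sgr_le_Lseq L
  have hL2 : 2 ≤ Lseq L := two_le_Lseq L
  have hLn : Lseq L < nseq L := Lseq_lt_nseq L
  have g2 : ∀ m : ℕ, Yset' (L + 1) (ext L a) L (Function.update ρ (Fin.last L) m) =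
      if m < nseq L then phi L m '' Set.Iio A else ∅ := by
    intro m
    have h1 := Yset'_ext L a (le_refl L) (Function.update ρ (Fin.last L) m)
    rw [Function.update_self, htop] at h1
    exact h1
  have hpure : ∀ m, m < Lseq L → ∀ p : ℕ, phi L m p = m * A + p :=
    fun m hm p => if_pos hm
  refine ⟨?_, ?_, ?_⟩
  · intro m m' hm hm' hmm
    rw [g2 m, g2 m', if_pos (lt_trans hm hLn), if_pos (lt_trans hm' hLn)]
    apply Set.disjoint_image_image
    intro p hp q hq he
    rw [hpure m hm p, hpure m' hm' q] at he
    have h1 : (m * A + p) / A = (m' * A + q) / A := congrArg (· / A) he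
    rw [block_div hA hp, block_div hA hq] at h1
    exact hmm h1
  · rw [Yset'_ext_top, htop]
    have hR : (⋃ m ∈ Set.Iio (Lseq L),
        Yset' (L + 1) (ext L a) L (Function.update ρ (Fin.last L) m)) =
        ⋃ m ∈ Set.Iio (Lseq L), phi L m '' Set.Iio A :=
      Set.iUnion₂_congr fun m hm => (g2 m).trans (if_pos (lt_trans hm hLn))
    rw [hR]
    ext y
    simp only [Set.mem_iUnion, Set.mem_Iio, exists_prop, Set.mem_image]
    constructor
    · rintro ⟨k, hk, p, hpA, rfl⟩
      by_cases hkL : k < Lseq L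
      · exact ⟨k, hkL, p, hpA, rfl⟩
      · have hmix : phi L k p = p * A + (k - Lseq L) / A ^ p % A := if_neg hkL
        refine ⟨p, lt_of_lt_of_le hpA hAL, (k - Lseq L) / A ^ p % A,
          Nat.mod_lt _ hA, ?_⟩
        rw [hpure p (lt_of_lt_of_le hpA hAL), hmix]
    · rintro ⟨m, hm, p, hpA, rfl⟩
      exact ⟨m, lt_trans hm hLn, p, hpA, rfl⟩
  · intro Y hYsub hmeet
    have hv : ∀ b : ℕ, ∃ p : ℕ, p < A ∧ (b < A → b * A + p ∈ Y) := by
      intro b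
      by_cases hb : b < A
      · obtain ⟨y, hy1, hy2⟩ := hmeet b (lt_of_lt_of_le hb hAL)
        rw [g2 b, if_pos (lt_trans (lt_of_lt_of_le hb hAL) hLn)] at hy2
        obtain ⟨p, hpA, he⟩ := hy2
        refine ⟨p, hpA, fun _ => ?_⟩
        rw [← hpure b (lt_of_lt_of_le hb hAL) p, he]
        exact hy1
      · exact ⟨0, hA, fun h => absurd h hb⟩
    choose v hv1 hv2 using hv
    set e : ℕ := ∑ b ∈ Finset.range A, v b * A ^ b with hedef
    have he1 : e < A ^ A := sum_digits_lt hA v A (fun b _ => hv1 b)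
    have he2 : A ^ A ≤ Lseq L ^ Lseq L :=
      le_trans (Nat.pow_le_pow_left hAL A) (Nat.pow_le_pow_right (by omega) hAL)
    refine ⟨Lseq L + e, by unfold nseq; omega, ?_⟩
    rw [g2 (Lseq L + e), if_pos (by unfold nseq; omega)]
    rintro y ⟨p, hpA, rfl⟩
    have hpA' : p < A := hpA
    have hmix : phi L (Lseq L + e) p = p * A + (Lseq L + e - Lseq L) / A ^ p % A :=
      if_neg (by omega)
    rw [hmix]
    have hcancel : Lseq L + e - Lseq L = e := by omega
    rw [hcancel, hedef, digit_extract hA p A v (fun b _ => hv1 b) hpA']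
    exact hv2 p hpA'

end CondLemmas

/-- The inductive invariant: an `L`-coordinate structure on ground set `[0, Sgr L)`. -/
def Good (L : ℕ) (a : (Fin L → ℕ) → Finset ℕ) : Prop :=
  (∀ x : Fin L → ℕ, (∀ j, x j < nseq (j : ℕ)) → (a x).card = 2) ∧
  (∀ i : Fin L, ∀ ρ : Fin L → ℕ,
    (∀ m m' : ℕ, m < Lseq (i : ℕ) → m' < Lseq (i : ℕ) → m ≠ m' →
      Disjoint (Yset' L a (i : ℕ) (Function.update ρ i m))
        (Yset' L a (i : ℕ) (Function.update ρ i m'))) ∧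
    (Yset' L a ((i : ℕ) + 1) ρ =
      ⋃ m ∈ Set.Iio (Lseq (i : ℕ)), Yset' L a (i : ℕ) (Function.update ρ i m)) ∧
    (∀ Y : Set ℕ, Y ⊆ Yset' L a ((i : ℕ) + 1) ρ →
      (∀ m < Lseq (i : ℕ),
        (Y ∩ Yset' L a (i : ℕ) (Function.update ρ i m)).Nonempty) →
      ∃ k < nseq (i : ℕ), Yset' L a (i : ℕ) (Function.update ρ i k) ⊆ Y)) ∧
  (∀ ρ : Fin L → ℕ, Yset' L a L ρ = Set.Iio (Sgr L))

theorem good_zero : Good 0 (fun _ => ({0, 1} : Finset ℕ)) := by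
  refine ⟨fun x _ => by rfl, fun i => i.elim0, fun ρ => ?_⟩
  ext y
  rw [mem_Yset']
  constructor
  · rintro ⟨x, -, -, hy⟩
    simp only [Finset.mem_insert, Finset.mem_singleton] at hy
    simp only [Set.mem_Iio, Sgr]
    omega
  · intro hy
    simp only [Set.mem_Iio, Sgr] at hy
    refine ⟨Fin.elim0, fun j => j.elim0, fun j => j.elim0, ?_⟩
    simp only [Finset.mem_insert, Finset.mem_singleton]
    omega

theorem good_succ (L : ℕ) (a : (Fin L → ℕ) → Finset ℕ) (h : Good L a) :
    Good (L + 1) (ext L a) := by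
  obtain ⟨hcard, hcond, htop⟩ := h
  set A := Sgr L with hAdef
  have hA : 0 < A := Sgr_pos L
  have hAL : A ≤ Lseq L := Sgr_le_Lseq L
  have hL2 : 2 ≤ Lseq L := two_le_Lseq L
  have hLn : Lseq L < nseq L := Lseq_lt_nseq L
  have hsub : ∀ (i'' : ℕ) (ρ'' : Fin L → ℕ), Yset' L a i'' ρ'' ⊆ Set.Iio A := by
    intro i'' ρ''
    have h1 : Yset' L a i'' ρ'' ⊆ Yset' L a L ρ'' := Yset'_subset_top
    rwa [htop ρ''] at h1
  have hinj : ∀ c : ℕ, Set.InjOn (phi L c) (Set.Iio A) :=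
    fun c p hp q hq h => phi_inj hp hq h
  have hasub : ∀ x : Fin L → ℕ, (∀ j, x j < nseq (j : ℕ)) → ∀ p ∈ a x, p < A := by
    intro x hx p hp
    have := a_subset_top (a := a) hx (ρ := fun _ => 0) hp
    rwa [htop, Set.mem_Iio] at this
  refine ⟨?_, ?_, ?_⟩
  · -- cardinalities
    intro x hx
    have hx' : ∀ j : Fin L, x j.castSucc < nseq (j : ℕ) := fun j => by
      simpa using hx j.castSucc
    unfold ext
    rw [Finset.card_image_of_injOn, hcard _ hx']
    intro p hp q hq hpq
    exact phi_inj (hasub _ hx' p hp) (hasub _ hx' q hq) hpq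
  · -- main conditions
    intro i ρ
    by_cases hiL : (i : ℕ) < L
    · exact cond_lt L a hcond htop i ρ hiL
    · have hi : i = Fin.last L := Fin.ext (by have := i.isLt; simp [Fin.last]; omega)
      subst hi
      exact cond_last L a htop ρ
  · -- ground set
    intro ρ
    rw [Yset'_ext_top, htop]
    ext y
    simp only [Set.mem_iUnion, Set.mem_Iio, exists_prop, Set.mem_image]
    constructor
    · rintro ⟨k, hk, p, hp, rfl⟩
      have : Sgr (L + 1) = Lseq L * A := rfl
      rw [this]
      exact phi_lt hk hp
    · intro hy
      have hy' : y < Lseq L * A := hy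
      have hdiv : y / A < Lseq L := (Nat.div_lt_iff_lt_mul hA).2 hy'
      refine ⟨y / A, lt_of_lt_of_le hdiv (le_of_lt hLn), y % A, Nat.mod_lt _ hA, ?_⟩
      unfold phi
      rw [if_pos hdiv, mul_comm, Nat.div_add_mod]

theorem good_exists : ∀ L : ℕ, ∃ a : (Fin L → ℕ) → Finset ℕ, Good L a := by
  intro L
  induction L with
  | zero => exact ⟨_, good_zero⟩
  | succ L ih =>
    obtain ⟨a, h⟩ := ih
    exact ⟨ext L a, good_succ L a h⟩


/-- For every `ℓ` there is an `ℓ`-structure: a family `{a x : x ∈ 𝒩_ℓ}` of two-element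
subsets of ℕ such that, with `Y_ρ` as in `Yset`, for every `i ≤ ℓ` and every partial
index `ρ` (on `{i+1,…,ℓ}`): (a) the sets `Y_{ρ⌢m}` for `m < L i` are pairwise disjoint;
(b) `Y_ρ` equals the union of the `Y_{ρ⌢m}` for `m < L i` (so every `Y_{ρ⌢k}` with
`k < n i` is contained in this union); (c) every `Y ⊆ Y_ρ` meeting all `Y_{ρ⌢m}` with
`m < L i` contains `Y_{ρ⌢k}` for some `k < n i`.  Moreover `Y_∅` is an initial segment
of ℕ of cardinality at most `L (ℓ+1)`. -/
theorem exists_ell_structure (ℓ : ℕ) :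
    ∃ a : (Fin (ℓ + 1) → ℕ) → Finset ℕ,
      (∀ x : Fin (ℓ + 1) → ℕ, (∀ j, x j < nseq (j : ℕ)) → (a x).card = 2) ∧
      (∀ i : Fin (ℓ + 1), ∀ ρ : Fin (ℓ + 1) → ℕ,
        (∀ m m' : ℕ, m < Lseq (i : ℕ) → m' < Lseq (i : ℕ) → m ≠ m' →
          Disjoint (Yset ℓ a (i : ℕ) (Function.update ρ i m))
            (Yset ℓ a (i : ℕ) (Function.update ρ i m'))) ∧
        (Yset ℓ a ((i : ℕ) + 1) ρ =
          ⋃ m ∈ Set.Iio (Lseq (i : ℕ)), Yset ℓ a (i : ℕ) (Function.update ρ i m)) ∧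
        (∀ Y : Set ℕ, Y ⊆ Yset ℓ a ((i : ℕ) + 1) ρ →
          (∀ m < Lseq (i : ℕ),
            (Y ∩ Yset ℓ a (i : ℕ) (Function.update ρ i m)).Nonempty) →
          ∃ k < nseq (i : ℕ), Yset ℓ a (i : ℕ) (Function.update ρ i k) ⊆ Y)) ∧
      (∃ N ≤ Lseq (ℓ + 1), Yset ℓ a (ℓ + 1) (fun _ => 0) = Set.Iio N) := by
  obtain ⟨a, h1, h2, h3⟩ := good_exists (ℓ + 1)
  exact ⟨a, h1, h2, ⟨Sgr (ℓ + 1), Sgr_le_Lseq (ℓ + 1), h3 _⟩⟩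
end
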